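/- Let (Q, +) be an abelian group, let φ and ψ be commuting automorphisms of (Q, +) (so that x·y = φ(x) + ψ(y) defines a medial quasigroup). Then the Schröder identity of generalized associativity (y·z)·(z·(x·y)) = x holds for all x, y, z ∈ Q if and only if: (i) x + x = 0 for all x ∈ Q (the group (Q, +) is an abelian 2-group); (ii) φ(x) = ψ⁻¹(ψ⁻¹(x)) for all x (i.e. φ = ψ⁻²); and (iii) ψ⁷ = id (whence also φ⁷ = id and ψ¹⁴ = id). -/

import Mathlib

/-- In a medial T-quasigroup `x·y = φ(x) + ψ(y)` (with `φψ = ψφ`) over an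
abelian group, the Schröder identity of generalized associativity
`(y·z)·(z·(x·y)) = x` holds iff `(Q,+)` is an abelian 2-group, `φ = ψ⁻²`
and `ψ⁷ = id`. -/
theorem medial_tquasigroup_schroeder_gen_assoc_iff {Q : Type*} [AddCommGroup Q]
    (φ ψ : AddAut Q) (hcomm : ∀ x : Q, φ (ψ x) = ψ (φ x)) :
    (∀ x y z : Q,
        (φ (φ y + ψ z) + ψ (φ z + ψ (φ x + ψ y))) = x) ↔
      ((∀ x : Q, x + x = 0) ∧
       (∀ x : Q, φ x = ψ.symm (ψ.symm x)) ∧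
       (∀ x : Q, ψ (ψ (ψ (ψ (ψ (ψ (ψ x)))))) = x)) := by
  constructor
  · intro H
    have hφ : ∀ x : Q, ψ (ψ (φ x)) = x := by
      intro x
      simpa using H x 0 0
    have hφ' : ∀ x : Q, φ x = ψ.symm (ψ.symm x) := by
      intro x
      have h : ψ.symm (ψ.symm (ψ (ψ (φ x)))) = ψ.symm (ψ.symm x) := by rw [hφ x]
      simpa using h
    have h2 : ∀ x : Q, x + x = 0 := by
      intro x
      have h := H 0 0 (ψ.symm (φ.symm x))
      simp only [map_zero, add_zero, zero_add] at h
      rw [hcomm] at h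
      have hx : ψ (φ (ψ.symm (φ.symm x))) = x := by
        rw [← hcomm]; simp
      rwa [hx] at h
    refine ⟨h2, hφ', ?_⟩
    intro y
    have h := H 0 y 0
    simp only [map_zero, add_zero, zero_add] at h
    -- h : φ (φ y) + ψ (ψ (ψ y)) = 0
    have h3 : ψ (ψ (ψ y)) = φ (φ y) := by
      have := h2 (φ (φ y))
      have : φ (φ y) + (φ (φ y) + ψ (ψ (ψ y))) = φ (φ y) + 0 := by rw [h]
      rw [← add_assoc, h2 (φ (φ y)), zero_add, add_zero] at this
      exact this
    calc ψ (ψ (ψ (ψ (ψ (ψ (ψ y)))))) = ψ (ψ (ψ (ψ (φ (φ y))))) := by rw [h3]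
      _ = ψ (ψ (φ y)) := by rw [hφ (φ y)]
      _ = y := hφ y
  · rintro ⟨h2, hφ', h7⟩ x y z
    have hφ : ∀ x : Q, ψ (ψ (φ x)) = x := by
      intro x; rw [hφ' x]; simp
    have hφφ : φ (φ y) = ψ (ψ (ψ y)) := by
      have hinj : Function.Injective (fun a : Q => ψ (ψ (ψ (ψ a)))) := by
        intro a b hab
        simpa using congrArg (fun a => ψ.symm (ψ.symm (ψ.symm (ψ.symm a)))) hab
      apply hinj
      show ψ (ψ (ψ (ψ (φ (φ y))))) = ψ (ψ (ψ (ψ (ψ (ψ (ψ y))))))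
      rw [h7 y]
      rw [show ψ (ψ (ψ (ψ (φ (φ y))))) = ψ (ψ (ψ (ψ (φ (φ y))))) from rfl]
      calc ψ (ψ (ψ (ψ (φ (φ y))))) = ψ (ψ (φ y)) := by rw [hφ (φ y)]
        _ = y := hφ y
    have key : φ (ψ z) + ψ (φ z) = 0 := by rw [hcomm]; exact h2 _
    calc φ (φ y + ψ z) + ψ (φ z + ψ (φ x + ψ y))
        = (φ (φ y) + φ (ψ z)) + (ψ (φ z) + (ψ (ψ (φ x)) + ψ (ψ (ψ y)))) := by
          simp [map_add]
      _ = ψ (ψ (φ x)) + ((φ (φ y) + ψ (ψ (ψ y))) + (φ (ψ z) + ψ (φ z))) := by abel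
      _ = x + ((ψ (ψ (ψ y)) + ψ (ψ (ψ y))) + 0) := by rw [hφ, hφφ, key]
      _ = x := by rw [h2]; simp
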